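/- arXiv:2102.10312 — 4 statements merged into one kernel-verified Lean document; each statement's English description precedes it below -/
import Mathlib

section
/- Let h be a Legendre kernel on ℝⁿ and ψ : ℝⁿ → ℝ∪{∞} proper, lsc, and lower bounded on the closure of dom h. For x ∈ int dom h and any x̄ ∈ argmin_z {ψ(z) + D_h(z,x)}, if ψ is convex then for every y ∈ dom h: ψ(x̄) + D_h(x̄,x) ≤ ψ(y) + D_h(y,x) - D_h(y,x̄). -/
open Set Filter Topology

noncomputable def bregman {H : Type*} [NormedAddCommGroup H] [InnerProductSpace ℝ H]
    [CompleteSpace H] (h : H → ℝ) (x y : H) : ℝ :=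
  h x - h y - (inner ℝ (gradient h y) (x - y) : ℝ)

/-- `h` (extended by `+∞` outside `dom`) is a Legendre kernel: proper, lsc,
strictly convex, `C¹` on the (nonempty) interior of its domain, 1-coercive, and
essentially smooth. -/
def IsLegendreOn {H : Type*} [NormedAddCommGroup H] [InnerProductSpace ℝ H]
    [CompleteSpace H] (h : H → ℝ) (dom : Set H) : Prop :=
  (interior dom).Nonempty ∧
  LowerSemicontinuousOn h dom ∧
  StrictConvexOn ℝ dom h ∧
  ContDiffOn ℝ 1 h (interior dom) ∧
  -- 1-coercivity: h(x)/‖x‖ → ∞ as ‖x‖ → ∞ within dom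
  (∀ M : ℝ, ∃ R : ℝ, ∀ x ∈ dom, R ≤ ‖x‖ → M * ‖x‖ ≤ h x) ∧
  -- essential smoothness
  (∀ (x : ℕ → H) (x₀ : H), (∀ k, x k ∈ interior dom) →
    Tendsto x atTop (nhds x₀) → x₀ ∈ frontier dom →
    Tendsto (fun k => ‖gradient h (x k)‖) atTop atTop)

/-- `f` is `L`-smooth relative to `h` on `dom`: `L·h - f` and `L·h + f` are
convex on the interior of `dom`. -/
def RelSmooth {H : Type*} [NormedAddCommGroup H] [InnerProductSpace ℝ H]
    [CompleteSpace H] (f h : H → ℝ) (L : ℝ) (dom : Set H) : Prop :=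
  ConvexOn ℝ (interior dom) (fun x => L * h x - f x) ∧
  ConvexOn ℝ (interior dom) (fun x => L * h x + f x)

/-- Convexity of an extended-real-valued function. -/
def ERealConvex {H : Type*} [NormedAddCommGroup H] [InnerProductSpace ℝ H]
    (q : H → EReal) : Prop :=
  ∀ x y : H, ∀ a b : ℝ, 0 ≤ a → 0 ≤ b → a + b = 1 →
    q (a • x + b • y) ≤ (a : EReal) * q x + (b : EReal) * q y

/-- For convex `ψ`, the Bregman proximal point `x̄` of `x` satisfies
`ψ(x̄) + D_h(x̄,x) ≤ ψ(y) + D_h(y,x) - D_h(y,x̄)` for every `y ∈ dom h`. -/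
theorem bregman_prox_convex_inequality {n : ℕ}
    (h : EuclideanSpace ℝ (Fin n) → ℝ) (dom : Set (EuclideanSpace ℝ (Fin n)))
    (hleg : IsLegendreOn h dom)
    (ψ : EuclideanSpace ℝ (Fin n) → EReal)
    (hψproper : (∃ x, ψ x ≠ ⊤) ∧ ∀ x, ψ x ≠ ⊥)
    (hψlsc : LowerSemicontinuous ψ)
    (hψlb : ∃ m : ℝ, ∀ z ∈ closure dom, (m : EReal) ≤ ψ z)
    (hψconv : ERealConvex ψ)
    (x : EuclideanSpace ℝ (Fin n)) (hx : x ∈ interior dom)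
    (xbar : EuclideanSpace ℝ (Fin n)) (hxbar : xbar ∈ interior dom)
    (hargmin : ∀ z, ψ xbar + (bregman h xbar x : EReal) ≤ ψ z + (bregman h z x : EReal))
    (y : EuclideanSpace ℝ (Fin n)) (hy : y ∈ dom) :
    ψ xbar + (bregman h xbar x : EReal) ≤
      ψ y + (bregman h y x : EReal) - (bregman h y xbar : EReal) := by
  obtain ⟨hne, hlsc, hconv, hcd, hcoer, hess⟩ := hleg
  obtain ⟨⟨z0, hz0⟩, hnb⟩ := hψproper
  -- ψ xbar is finite
  have hxt : ψ xbar ≠ ⊤ := by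
    intro htop
    have h1 := hargmin z0
    rw [htop] at h1
    have h2 : ψ z0 + (bregman h z0 x : EReal) < ⊤ :=
      EReal.add_lt_top hz0 (EReal.coe_ne_top _)
    rw [EReal.top_add_coe, top_le_iff] at h1
    exact h2.ne h1
  set a : ℝ := (ψ xbar).toReal with haa
  have ha : ψ xbar = (a : EReal) := (EReal.coe_toReal hxt (hnb xbar)).symm
  rcases eq_top_or_lt_top (ψ y) with hyt | hyt
  · rw [hyt]
    rw [EReal.top_add_coe, EReal.top_sub_coe]
    exact le_top
  have hynt : ψ y ≠ ⊤ := hyt.ne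
  set r : ℝ := (ψ y).toReal with hrr
  have hr : ψ y = (r : EReal) := (EReal.coe_toReal hynt (hnb y)).symm
  set v := y - xbar with hv
  -- differentiability of h at xbar
  have hdiff : DifferentiableAt ℝ h xbar :=
    (hcd.contDiffAt (isOpen_interior.mem_nhds hxbar)).differentiableAt one_ne_zero
  have hgrad : HasGradientAt h (gradient h xbar) xbar := hdiff.hasGradientAt
  have hline : HasDerivAt (fun t : ℝ => h (xbar + t • v))
      ((inner ℝ (gradient h xbar) v : ℝ)) 0 := by
    have hc : HasDerivAt (fun t : ℝ => xbar + t • v) v 0 := by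
      simpa using ((hasDerivAt_id (0 : ℝ)).smul_const v).const_add xbar
    have hf : HasFDerivAt h (InnerProductSpace.toDual ℝ _ (gradient h xbar)) xbar :=
      hasGradientAt_iff_hasFDerivAt.mp hgrad
    have hf' : HasFDerivAt h (InnerProductSpace.toDual ℝ _ (gradient h xbar))
        (xbar + (0 : ℝ) • v) := by simpa using hf
    have := hf'.comp_hasDerivAt 0 hc
    rw [InnerProductSpace.toDual_apply_apply] at this
    exact this
  have hslope : Tendsto (fun t : ℝ => (h (xbar + t • v) - h xbar) / t)
      (𝓝[>] (0 : ℝ)) (𝓝 ((inner ℝ (gradient h xbar) v : ℝ))) := by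
    have h1 := hasDerivAt_iff_tendsto_slope.mp hline
    have h2 := h1.mono_left
      (nhdsWithin_mono (0 : ℝ) (fun t ht => ne_of_gt ht))
    refine h2.congr' ?_
    filter_upwards [self_mem_nhdsWithin] with t ht
    simp [slope_def_field, div_eq_inv_mul]
  -- eventual bound from argmin + convexity
  have hbound : ∀ᶠ t : ℝ in 𝓝[>] (0 : ℝ),
      a ≤ r + ((h (xbar + t • v) - h xbar) / t - (inner ℝ (gradient h x) v : ℝ)) := by
    filter_upwards [Ioo_mem_nhdsGT_of_mem
      (by constructor <;> norm_num : (0:ℝ) ∈ Ico (0:ℝ) 1)] with t ht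
    obtain ⟨ht0, ht1⟩ := ht
    set z := xbar + t • v with hz
    have hzc : z = (1 - t) • xbar + t • y := by
      rw [hz, hv]; module
    have hcv : ψ z ≤ ((1 - t) * a + t * r : ℝ) := by
      have := hψconv xbar y (1 - t) t (by linarith) (le_of_lt ht0) (by ring)
      rw [← hzc] at this
      rw [ha, hr] at this
      calc ψ z ≤ ((1 - t : ℝ) : EReal) * (a : EReal) + (t : EReal) * (r : EReal) := this
        _ = (((1 - t) * a + t * r : ℝ) : EReal) := by
            rw [← EReal.coe_mul, ← EReal.coe_mul, ← EReal.coe_add]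
    have hchain : ((a + bregman h xbar x : ℝ) : EReal) ≤
        (((1 - t) * a + t * r + bregman h z x : ℝ) : EReal) := by
      calc ((a + bregman h xbar x : ℝ) : EReal)
          = ψ xbar + (bregman h xbar x : EReal) := by rw [ha, EReal.coe_add]
        _ ≤ ψ z + (bregman h z x : EReal) := hargmin z
        _ ≤ (((1 - t) * a + t * r : ℝ) : EReal) + (bregman h z x : EReal) := by
            exact add_le_add_left hcv _
        _ = (((1 - t) * a + t * r + bregman h z x : ℝ) : EReal) := by
            norm_cast
    have hreal : a + bregman h xbar x ≤ (1 - t) * a + t * r + bregman h z x :=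
      EReal.coe_le_coe_iff.mp hchain
    -- unfold bregman and simplify
    simp only [bregman] at hreal
    have hzx : z - x = (xbar - x) + t • v := by rw [hz]; module
    rw [hzx] at hreal
    rw [inner_add_right, real_inner_smul_right] at hreal
    have hdt : (h z - h xbar) / t * t = h z - h xbar :=
      div_mul_cancel₀ _ (ne_of_gt ht0)
    nlinarith [hreal, hdt, ht0]
  have hlim : Tendsto (fun t : ℝ =>
      r + ((h (xbar + t • v) - h xbar) / t - (inner ℝ (gradient h x) v : ℝ)))
      (𝓝[>] (0 : ℝ))
      (𝓝 (r + ((inner ℝ (gradient h xbar) v : ℝ) - (inner ℝ (gradient h x) v : ℝ)))) :=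
    tendsto_const_nhds.add (hslope.sub tendsto_const_nhds)
  have key : a ≤ r + ((inner ℝ (gradient h xbar) v : ℝ) - (inner ℝ (gradient h x) v : ℝ)) :=
    ge_of_tendsto hlim hbound
  -- conclude
  have hrhs : ψ y + (bregman h y x : EReal) - (bregman h y xbar : EReal) =
      ((r + bregman h y x - bregman h y xbar : ℝ) : EReal) := by
    rw [hr, ← EReal.coe_add, ← EReal.coe_sub]
  rw [hrhs, ha, ← EReal.coe_add, EReal.coe_le_coe_iff]
  simp only [bregman, hv] at key ⊢
  simp only [inner_sub_right] at key ⊢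
  linarith
end

section
/- Let (α_k) ⊂ [0,∞) be a sequence and suppose there exist c > 0 and δ ∈ (1,∞) such that α_{k+1}^δ ≤ c(α_k - α_{k+1}) for every k ∈ ℕ. Then there exists c' > 0 such that α_k ≤ c'·k^{-1/(δ-1)} for all k ≥ 1. -/
open Real

lemma bern_aux {γ t : ℝ} (hγ : 0 < γ) (ht : 0 < t) (ht1 : t ≤ 1) :
    1 + γ * (1 - t) ≤ t ^ (-γ) := by
  have htpos : (0:ℝ) < t ^ γ := Real.rpow_pos_of_pos ht γ
  rcases le_or_gt 1 γ with hγ1 | hγ1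
  · have hs : (0:ℝ) ≤ (1 - t) / t := div_nonneg (by linarith) ht.le
    have h := one_add_mul_self_le_rpow_one_add (by linarith : (-1:ℝ) ≤ (1-t)/t) hγ1
    have he : 1 + (1 - t)/t = t⁻¹ := by field_simp; ring
    rw [he, Real.inv_rpow ht.le, ← Real.rpow_neg ht.le] at h
    have h2 : (1 - t) ≤ (1 - t)/t := by
      rw [le_div_iff₀ ht]; nlinarith
    nlinarith
  · have h := rpow_one_add_le_one_add_mul_self (by linarith : (-1:ℝ) ≤ t - 1) hγ.le hγ1.le
    rw [show 1 + (t - 1) = t by ring] at h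
    -- h : t ^ γ ≤ 1 + γ * (t - 1)
    have key : (1 + γ * (1 - t)) * t ^ γ ≤ 1 := by nlinarith [sq_nonneg (γ * (1 - t))]
    rw [Real.rpow_neg ht.le, inv_eq_one_div, le_div_iff₀ htpos]
    exact key

/-- If `α_{k+1}^δ ≤ c(α_k - α_{k+1})` with `δ > 1`, `c > 0` and `α_k ≥ 0`, then
`α_k ≤ c'·k^{-1/(δ-1)}` for all `k ≥ 1`, for some `c' > 0`. -/
theorem sublinear_of_sufficient_decrease (α : ℕ → ℝ) (hα : ∀ k, 0 ≤ α k)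
    (c δ : ℝ) (hc : 0 < c) (hδ : 1 < δ)
    (hdec : ∀ k, α (k + 1) ^ δ ≤ c * (α k - α (k + 1))) :
    ∃ c' > 0, ∀ k : ℕ, 1 ≤ k → α k ≤ c' * (k : ℝ) ^ (-(1 / (δ - 1))) := by
  set γ := δ - 1 with hγdef
  have hγ : 0 < γ := by simp only [hγdef]; linarith
  have hmono : ∀ k, α (k+1) ≤ α k := by
    intro k
    have h := hdec k
    have h0 : (0:ℝ) ≤ α (k+1) ^ δ := Real.rpow_nonneg (hα _) δ
    nlinarith
  have hmono' : ∀ k, α k ≤ α 0 := by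
    intro k
    induction k with
    | zero => exact le_refl _
    | succ n ih => exact (hmono n).trans ih
  rcases eq_or_lt_of_le (hα 0) with h0 | h0
  · refine ⟨1, one_pos, fun k hk => ?_⟩
    have hz : α k = 0 := le_antisymm (h0 ▸ hmono' k) (hα k)
    have := Real.rpow_nonneg (Nat.cast_nonneg (α := ℝ) k) (-(1/(δ-1)))
    rw [hz]; linarith
  set μ : ℝ := min (γ * 2^(-δ) / c) ((2^γ - 1) * (α 0) ^ (-γ)) with hμdef
  have h2γ : (1:ℝ) < 2 ^ γ := Real.one_lt_rpow_iff_of_pos (by norm_num) |>.2 (Or.inl ⟨one_lt_two, hγ⟩)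
  have hμpos : 0 < μ := by
    apply lt_min
    · have : (0:ℝ) < 2 ^ (-δ) := Real.rpow_pos_of_pos (by norm_num) _
      positivity
    · have : (0:ℝ) < (α 0) ^ (-γ) := Real.rpow_pos_of_pos h0 _
      nlinarith
  have key : ∀ k, 0 < α k → μ * k ≤ (α k) ^ (-γ) := by
    intro k
    induction k with
    | zero =>
      intro hpos
      simp only [Nat.cast_zero, mul_zero]
      exact (Real.rpow_pos_of_pos hpos _).le
    | succ n ih =>
      intro hpos
      have hApos : 0 < α n := lt_of_lt_of_le hpos (hmono n)
      have ihn := ih hApos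
      set A := α n
      set B := α (n+1)
      have hBA : B ≤ A := hmono n
      have hstep : A ^ (-γ) + μ ≤ B ^ (-γ) := by
        rcases le_or_gt (A / 2) B with hcase | hcase
        · -- A/2 ≤ B
          have ht : (0:ℝ) < B / A := div_pos hpos hApos
          have ht1 : B / A ≤ 1 := (div_le_one hApos).2 hBA
          have h2 := bern_aux hγ ht ht1
          have h3 : (B/A)^(-γ) = B^(-γ) * A^γ := by
            rw [Real.div_rpow hpos.le hApos.le, Real.rpow_neg hApos.le γ, div_inv_eq_mul]
          rw [h3] at h2
          have hAneg : (0:ℝ) < A ^ (-γ) := Real.rpow_pos_of_pos hApos _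
          have h4 := mul_le_mul_of_nonneg_left h2 hAneg.le
          have h5 : A^(-γ) * (B^(-γ) * A^γ) = B^(-γ) := by
            rw [show A^(-γ) * (B^(-γ) * A^γ) = B^(-γ) * (A^(-γ) * A^γ) by ring,
              ← Real.rpow_add hApos]
            simp
          rw [h5] at h4
          have hAd : A^(-γ) * A⁻¹ = A^(-δ) := by
            rw [← Real.rpow_neg_one A, ← Real.rpow_add hApos]
            congr 1
            rw [hγdef]; ring
          have h6 : A^(-γ) * (1 + γ*(1 - B/A)) = A^(-γ) + γ * (A - B) * A^(-δ) := by
            rw [← hAd]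
            field_simp
          rw [h6] at h4
          have h1 := hdec n
          have hBδ : (A/2)^δ ≤ B^δ := Real.rpow_le_rpow (by positivity) hcase (by linarith)
          have h7 : (A/2)^δ * A^(-δ) = 2^(-δ) := by
            rw [Real.div_rpow hApos.le (by norm_num), Real.rpow_neg hApos.le δ,
              Real.rpow_neg (by norm_num : (0:ℝ) ≤ 2) δ]
            have : (0:ℝ) < A ^ δ := Real.rpow_pos_of_pos hApos δ
            field_simp
          have hAdpos : (0:ℝ) < A ^ (-δ) := Real.rpow_pos_of_pos hApos _
          have hABc : (A/2)^δ ≤ (A - B) * c := by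
            calc (A/2)^δ ≤ B^δ := hBδ
              _ ≤ c * (A - B) := h1
              _ = (A - B) * c := by ring
          have h8 : γ * 2^(-δ) / c ≤ γ * (A - B) * A^(-δ) := by
            rw [div_le_iff₀ hc, ← h7]
            nlinarith [mul_le_mul_of_nonneg_left hABc (mul_nonneg hγ.le hAdpos.le)]
          have h9 : μ ≤ γ * 2^(-δ) / c := min_le_left _ _
          have h10 : μ ≤ γ * (A - B) * A^(-δ) := le_trans h9 h8
          linarith
        · -- B < A/2
          have hA2 : (0:ℝ) < A / 2 := by linarith
          have h2 : (A/2)^(-γ) ≤ B^(-γ) :=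
            Real.rpow_le_rpow_of_nonpos hpos hcase.le (by linarith)
          have h3 : (A/2)^(-γ) = A^(-γ) * 2^γ := by
            rw [Real.div_rpow hApos.le (by norm_num),
              Real.rpow_neg (by norm_num : (0:ℝ) ≤ 2) γ, div_inv_eq_mul]
          rw [h3] at h2
          have h4 : (α 0)^(-γ) ≤ A^(-γ) :=
            Real.rpow_le_rpow_of_nonpos hApos (hmono' n) (by linarith)
          have h5 : μ ≤ (2^γ - 1) * (α 0)^(-γ) := min_le_right _ _
          have hAneg : (0:ℝ) < A ^ (-γ) := Real.rpow_pos_of_pos hApos _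
          nlinarith
      have hcast : μ * ((n:ℝ)+1) = μ * n + μ := by ring
      push_cast
      rw [hcast]
      linarith
  refine ⟨μ ^ (-(1/γ)), Real.rpow_pos_of_pos hμpos _, fun k hk => ?_⟩
  have hkpos : (0:ℝ) < k := by exact_mod_cast hk
  rcases eq_or_lt_of_le (hα k) with hz | hz
  · have h1 : (0:ℝ) < μ ^ (-(1/γ)) := Real.rpow_pos_of_pos hμpos _
    have h2 : (0:ℝ) ≤ (k:ℝ) ^ (-(1/γ)) := Real.rpow_nonneg hkpos.le _
    rw [← hz]
    exact mul_nonneg h1.le h2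
  · have hkey := key k hz
    have hμk : 0 < μ * k := mul_pos hμpos hkpos
    have h1 : ((α k)^(-γ))^(-(1/γ)) ≤ (μ * k)^(-(1/γ)) :=
      Real.rpow_le_rpow_of_nonpos hμk hkey (neg_nonpos.2 (by positivity))
    have h2 : ((α k)^(-γ))^(-(1/γ)) = α k := by
      rw [← Real.rpow_mul (hα k)]
      have hne : (-γ) * (-(1/γ)) = 1 := by field_simp
      rw [hne, Real.rpow_one]
    have h3 : (μ * k)^(-(1/γ)) = μ^(-(1/γ)) * (k:ℝ)^(-(1/γ)) :=
      Real.mul_rpow hμpos.le hkpos.le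
    rw [h2, h3] at h1
    exact h1
end

section
/- Let a ∈ ℝⁿ and b ≥ 0, and define f(x) = (1/4)(⟨a,x⟩² - b)² and h(x) = (1/4)‖x‖⁴ + (1/2)‖x‖². Then f is L-smooth relative to h with L = 3‖a‖⁴ + ‖a‖²·b, i.e., both L·h - f and L·h + f are convex on ℝⁿ. -/
open Set

lemma quartic_hasDerivAt (a0 a1 a2 a3 a4 : ℝ) (t : ℝ) :
    HasDerivAt (fun t : ℝ => a0 + a1*t + a2*t^2 + a3*t^3 + a4*t^4)
      (a1 + 2*a2*t + 3*a3*t^2 + 4*a4*t^3) t := by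
  have h := ((((hasDerivAt_const t a0).add ((hasDerivAt_id t).const_mul a1)).add
      ((hasDerivAt_pow 2 t).const_mul a2)).add
      ((hasDerivAt_pow 3 t).const_mul a3)).add
      ((hasDerivAt_pow 4 t).const_mul a4)
  refine h.congr_deriv ?_
  push_cast; ring

lemma cubic_hasDerivAt (a1 a2 a3 a4 : ℝ) (t : ℝ) :
    HasDerivAt (fun t : ℝ => a1 + 2*a2*t + 3*a3*t^2 + 4*a4*t^3)
      (2*a2 + 6*a3*t + 12*a4*t^2) t := by
  have h := (((hasDerivAt_const t a1).add ((hasDerivAt_id t).const_mul (2*a2))).add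
      ((hasDerivAt_pow 2 t).const_mul (3*a3))).add
      ((hasDerivAt_pow 3 t).const_mul (4*a4))
  refine h.congr_deriv ?_
  push_cast; ring

lemma quartic_convex (a0 a1 a2 a3 a4 : ℝ)
    (h : ∀ t : ℝ, 0 ≤ 2*a2 + 6*a3*t + 12*a4*t^2) :
    ConvexOn ℝ univ (fun t : ℝ => a0 + a1*t + a2*t^2 + a3*t^3 + a4*t^4) := by
  have hd1 : deriv (fun t : ℝ => a0 + a1*t + a2*t^2 + a3*t^3 + a4*t^4)
      = fun t => a1 + 2*a2*t + 3*a3*t^2 + 4*a4*t^3 := by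
    ext t; exact (quartic_hasDerivAt a0 a1 a2 a3 a4 t).deriv
  apply convexOn_of_deriv2_nonneg convex_univ
  · exact (Continuous.continuousOn (by continuity))
  · intro t _; exact (quartic_hasDerivAt a0 a1 a2 a3 a4 t).differentiableAt.differentiableWithinAt
  · intro t _; rw [hd1]
    exact (cubic_hasDerivAt a1 a2 a3 a4 t).differentiableAt.differentiableWithinAt
  · intro t _
    have : deriv^[2] (fun t : ℝ => a0 + a1*t + a2*t^2 + a3*t^3 + a4*t^4) t
        = 2*a2 + 6*a3*t + 12*a4*t^2 := by
      rw [Function.iterate_succ, Function.iterate_one, Function.comp_apply, hd1]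
      exact (cubic_hasDerivAt a1 a2 a3 a4 t).deriv
    rw [this]; exact h t

lemma scalar_quartic (Na A B C T M b σ : ℝ) (hb : 0 ≤ b) (hσ : σ = 1 ∨ σ = -1)
    (hC : 0 ≤ C) (hc : 0 ≤ Na)
    (hq : ∀ t : ℝ, 0 ≤ A + B*t + C*t^2)
    (hcs : ∀ t : ℝ, (T + M*t)^2 ≤ Na*(A + B*t + C*t^2))
    (hM : M^2 ≤ Na*C) :
    ConvexOn ℝ univ (fun τ : ℝ =>
      (3*Na^2 + Na*b) * ((1/4)*(A + B*τ + C*τ^2)^2 + (1/2)*(A + B*τ + C*τ^2))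
        + σ * ((1/4)*((T + M*τ)^2 - b)^2)) := by
  have key := quartic_convex
    ((3*Na^2 + Na*b)*(A^2/4 + A/2) + σ*(1/4)*(T^4 - 2*b*T^2 + b^2))
    ((3*Na^2 + Na*b)*(A*B/2 + B/2) + σ*(T^3*M - b*T*M))
    ((3*Na^2 + Na*b)*((B^2 + 2*A*C)/4 + C/2) + σ*((3/2)*T^2*M^2 - (b/2)*M^2))
    ((3*Na^2 + Na*b)*(B*C/2) + σ*(T*M^3))
    ((3*Na^2 + Na*b)*(C^2/4) + σ*(M^4/4))
    (by
      intro t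
      have h1 := hq t
      have h2 := hcs t
      have hprod : (T + M*t)^2 * M^2 ≤ (Na*(A + B*t + C*t^2)) * (Na*C) :=
        mul_le_mul h2 hM (sq_nonneg M) (by positivity)
      have hbM : b*M^2 ≤ b*(Na*C) := mul_le_mul_of_nonneg_left hM hb
      have hs := sq_nonneg (B + 2*C*t)
      have hCq : (0:ℝ) ≤ C*(A + B*t + C*t^2) := mul_nonneg hC h1
      have t1 : (0:ℝ) ≤ Na^2*(B + 2*C*t)^2 := mul_nonneg (sq_nonneg Na) hs
      have t2 : (0:ℝ) ≤ Na^2*(C*(A + B*t + C*t^2)) := mul_nonneg (sq_nonneg Na) hCq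
      have t3 : (0:ℝ) ≤ Na^2*C := mul_nonneg (sq_nonneg Na) hC
      have t4 : (0:ℝ) ≤ Na*b*(B + 2*C*t)^2 := mul_nonneg (mul_nonneg hc hb) hs
      have t5 : (0:ℝ) ≤ Na*b*(C*(A + B*t + C*t^2)) := mul_nonneg (mul_nonneg hc hb) hCq
      have t6 : (0:ℝ) ≤ (T + M*t)^2 * M^2 := mul_nonneg (sq_nonneg _) (sq_nonneg _)
      have t7 : (0:ℝ) ≤ b*M^2 := mul_nonneg hb (sq_nonneg M)
      rcases hσ with rfl | rfl
      · have heq : 2*((3*Na^2 + Na*b)*((B^2 + 2*A*C)/4 + C/2) + (1:ℝ)*((3/2)*T^2*M^2 - (b/2)*M^2))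
            + 6*((3*Na^2 + Na*b)*(B*C/2) + (1:ℝ)*(T*M^3))*t
            + 12*((3*Na^2 + Na*b)*(C^2/4) + (1:ℝ)*(M^4/4))*t^2
            = (3*Na^2 + Na*b)*((1/2)*(B + 2*C*t)^2 + C*(A + B*t + C*t^2) + C)
              + ((3*(T + M*t)^2 - b)*M^2) := by ring
        rw [heq]
        nlinarith [t1, t2, t3, t4, t5, t6, t7, hbM]
      · have heq : 2*((3*Na^2 + Na*b)*((B^2 + 2*A*C)/4 + C/2) + (-1:ℝ)*((3/2)*T^2*M^2 - (b/2)*M^2))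
            + 6*((3*Na^2 + Na*b)*(B*C/2) + (-1:ℝ)*(T*M^3))*t
            + 12*((3*Na^2 + Na*b)*(C^2/4) + (-1:ℝ)*(M^4/4))*t^2
            = (3*Na^2 + Na*b)*((1/2)*(B + 2*C*t)^2 + C*(A + B*t + C*t^2) + C)
              - ((3*(T + M*t)^2 - b)*M^2) := by ring
        rw [heq]
        nlinarith [t1, t2, t3, t4, t5, t6, t7, hprod])
  convert key using 2 with τ
  ring

lemma line_convex {n : ℕ} (F : EuclideanSpace ℝ (Fin n) → ℝ)
    (h : ∀ x y : EuclideanSpace ℝ (Fin n),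
      ConvexOn ℝ univ (fun τ : ℝ => F (x + τ • (y - x)))) :
    ConvexOn ℝ univ F := by
  refine ⟨convex_univ, fun x _ y _ α β hα hβ hαβ => ?_⟩
  have h2 := (h x y).2 (mem_univ (0:ℝ)) (mem_univ (1:ℝ)) hα hβ hαβ
  have e0 : x + ((α * 0 + β * 1) : ℝ) • (y - x) = α • x + β • y := by
    have : α = 1 - β := by linarith
    subst this
    simp [smul_sub, sub_smul]
    abel
  have e1 : x + (0:ℝ) • (y - x) = x := by simp
  have e2 : x + (1:ℝ) • (y - x) = y := by simp
  simp only [smul_eq_mul] at h2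
  rw [e0, e1, e2] at h2
  simpa using h2

lemma line_case {n : ℕ} (a x z : EuclideanSpace ℝ (Fin n)) (b σ : ℝ)
    (hb : 0 ≤ b) (hσ : σ = 1 ∨ σ = -1) :
    ConvexOn ℝ univ (fun τ : ℝ =>
      (3 * ‖a‖ ^ 4 + ‖a‖ ^ 2 * b) * ((1 / 4) * ‖x + τ • z‖ ^ 4 + (1 / 2) * ‖x + τ • z‖ ^ 2)
        + σ * ((1 / 4) * ((inner ℝ a (x + τ • z) : ℝ) ^ 2 - b) ^ 2)) := by
  have hq : ∀ t : ℝ, ‖x + t • z‖^2 = ‖x‖^2 + (2*(inner ℝ x z : ℝ))*t + ‖z‖^2*t^2 := by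
    intro t
    rw [norm_add_sq_real, real_inner_smul_right, norm_smul]
    simp [mul_pow, sq_abs]
    ring
  have hl : ∀ t : ℝ, (inner ℝ a (x + t • z) : ℝ) = (inner ℝ a x : ℝ) + (inner ℝ a z : ℝ)*t := by
    intro t
    rw [inner_add_right, real_inner_smul_right]
    ring
  have key := scalar_quartic (‖a‖^2) (‖x‖^2) (2*(inner ℝ x z : ℝ)) (‖z‖^2)
      (inner ℝ a x : ℝ) (inner ℝ a z : ℝ) b σ hb hσ (sq_nonneg _) (sq_nonneg _)
      (fun t => by rw [← hq t]; exact sq_nonneg _)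
      (fun t => by
        rw [← hq t, ← hl t]
        have h1 := abs_real_inner_le_norm a (x + t • z)
        calc (inner ℝ a (x + t • z) : ℝ)^2 = |(inner ℝ a (x + t • z) : ℝ)|^2 := (sq_abs _).symm
          _ ≤ (‖a‖ * ‖x + t • z‖)^2 := by
              apply pow_le_pow_left₀ (abs_nonneg _) h1
          _ = ‖a‖^2 * ‖x + t • z‖^2 := by ring)
      (by
        have h1 := abs_real_inner_le_norm a z
        calc (inner ℝ a z : ℝ)^2 = |(inner ℝ a z : ℝ)|^2 := (sq_abs _).symm
          _ ≤ (‖a‖ * ‖z‖)^2 := by apply pow_le_pow_left₀ (abs_nonneg _) h1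
          _ = ‖a‖^2 * ‖z‖^2 := by ring)
  convert key using 2 with τ
  rw [hl τ]
  have h4 : ‖x + τ • z‖^4 = (‖x‖^2 + (2*(inner ℝ x z : ℝ))*τ + ‖z‖^2*τ^2)^2 := by
    rw [show (4:ℕ) = 2*2 from rfl, pow_mul, hq τ]
  rw [h4, hq τ]
  ring

/-- The quartic phase-retrieval loss `f(x) = (1/4)(⟨a,x⟩² - b)²` is
`L`-smooth relative to `h(x) = (1/4)‖x‖⁴ + (1/2)‖x‖²` with
`L = 3‖a‖⁴ + ‖a‖²·b`. -/
theorem phase_retrieval_relsmooth {n : ℕ}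
    (a : EuclideanSpace ℝ (Fin n)) (b : ℝ) (hb : 0 ≤ b) :
    ConvexOn ℝ univ (fun x : EuclideanSpace ℝ (Fin n) =>
      (3 * ‖a‖ ^ 4 + ‖a‖ ^ 2 * b) * ((1 / 4) * ‖x‖ ^ 4 + (1 / 2) * ‖x‖ ^ 2) -
        (1 / 4) * ((inner ℝ a x : ℝ) ^ 2 - b) ^ 2) ∧
    ConvexOn ℝ univ (fun x : EuclideanSpace ℝ (Fin n) =>
      (3 * ‖a‖ ^ 4 + ‖a‖ ^ 2 * b) * ((1 / 4) * ‖x‖ ^ 4 + (1 / 2) * ‖x‖ ^ 2) +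
        (1 / 4) * ((inner ℝ a x : ℝ) ^ 2 - b) ^ 2) := by
  constructor
  · apply line_convex
    intro x y
    have := line_case a x (y - x) b (-1) hb (Or.inr rfl)
    convert this using 2 with τ
    ring
  · apply line_convex
    intro x y
    have := line_case a x (y - x) b 1 hb (Or.inl rfl)
    convert this using 2 with τ
    ring
end

section
/- Let a ∈ ℝⁿ₊ \ {0} and b > 0, and on the open positive orthant define f(x) = -b·log(⟨a,x⟩²) + ⟨a,x⟩² and h(x) = ‖a‖²‖x‖² - 2b·∑_{j=1}^n log(x_j). Then ∇²h(x) - ∇²f(x) is positive semidefinite for every x with all coordinates strictly positive; that is, f is 1-smooth relative to h (h - f is convex on the positive orthant). -/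
open Set Finset

noncomputable section Aux

variable {n : ℕ}

/-- the gradient vector of `h - f` -/
def pprGvec (a : EuclideanSpace ℝ (Fin n)) (b : ℝ) (x : EuclideanSpace ℝ (Fin n)) :
    EuclideanSpace ℝ (Fin n) :=
  (2 * ‖a‖ ^ 2) • x - (2 * b) • ∑ j, (x j)⁻¹ • EuclideanSpace.single j (1 : ℝ)
    + (2 * b * ((inner ℝ a x : ℝ))⁻¹ - 2 * (inner ℝ a x : ℝ)) • a

/-- the Hessian of `h - f` -/
def pprLmap (a : EuclideanSpace ℝ (Fin n)) (b : ℝ) (x : EuclideanSpace ℝ (Fin n)) :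
    EuclideanSpace ℝ (Fin n) →L[ℝ] EuclideanSpace ℝ (Fin n) :=
  ((2 * ‖a‖ ^ 2) • ContinuousLinearMap.id ℝ (EuclideanSpace ℝ (Fin n))
    - (2 * b) • ∑ j, ((-((x j) ^ 2)⁻¹) • (EuclideanSpace.proj j)).smulRight
        (EuclideanSpace.single j (1 : ℝ)))
  + ((2 * b) • ((-(((inner ℝ a x : ℝ)) ^ 2)⁻¹) • (innerSL ℝ a))
      - (2 : ℝ) • (innerSL ℝ a)).smulRight a

theorem pprS_pos (a : EuclideanSpace ℝ (Fin n)) (ha : ∀ i, 0 ≤ a i) (ha0 : a ≠ 0)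
    (x : EuclideanSpace ℝ (Fin n)) (hx : ∀ i, 0 < x i) : 0 < (inner ℝ a x : ℝ) := by
  have : ∃ i, a i ≠ 0 := by
    by_contra h
    push_neg at h
    exact ha0 (by ext i; simpa using h i)
  obtain ⟨i, hi⟩ := this
  have hai : 0 < a i := lt_of_le_of_ne (ha i) (Ne.symm hi)
  rw [PiLp.inner_apply]
  refine Finset.sum_pos' (fun j _ => ?_) ⟨i, Finset.mem_univ i, ?_⟩
  · simpa using mul_nonneg (hx j).le (ha j)
  · simpa using mul_pos (hx i) hai

theorem pprHasFDerivAt_Gvec (a : EuclideanSpace ℝ (Fin n)) (b : ℝ)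
    (x : EuclideanSpace ℝ (Fin n)) (hx : ∀ i, 0 < x i) (hS : (inner ℝ a x : ℝ) ≠ 0) :
    HasFDerivAt (pprGvec a b) (pprLmap a b x) x := by
  have hSd : HasFDerivAt (fun y : EuclideanSpace ℝ (Fin n) => (inner ℝ a y : ℝ)) (innerSL ℝ a) x :=
    (innerSL ℝ a).hasFDerivAt
  have h1 : HasFDerivAt (fun y : EuclideanSpace ℝ (Fin n) => (2 * ‖a‖ ^ 2) • y)
      ((2 * ‖a‖ ^ 2) • ContinuousLinearMap.id ℝ (EuclideanSpace ℝ (Fin n))) x :=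
    (hasFDerivAt_id (𝕜 := ℝ) x).const_smul (2 * ‖a‖ ^ 2 : ℝ)
  have h2 : HasFDerivAt (𝕜 := ℝ)
      (fun y : EuclideanSpace ℝ (Fin n) => ∑ j, (y j)⁻¹ • EuclideanSpace.single j (1 : ℝ))
      (∑ j, ((-((x j) ^ 2)⁻¹) • (EuclideanSpace.proj j)).smulRight
        (EuclideanSpace.single j (1 : ℝ))) x := by
    refine HasFDerivAt.fun_sum fun j _ => ?_
    have hpj : HasFDerivAt (𝕜 := ℝ) (fun y : EuclideanSpace ℝ (Fin n) => y j)
        (EuclideanSpace.proj j) x :=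
      ContinuousLinearMap.hasFDerivAt
        (EuclideanSpace.proj j : EuclideanSpace ℝ (Fin n) →L[ℝ] ℝ)
    have hinv : HasFDerivAt (𝕜 := ℝ) (fun y : EuclideanSpace ℝ (Fin n) => (y j)⁻¹)
        ((-((x j) ^ 2)⁻¹) • EuclideanSpace.proj j) x := by
      exact (hasDerivAt_inv (hx j).ne').comp_hasFDerivAt x hpj
    exact hinv.smul_const _
  have h3 : HasFDerivAt
      (fun y : EuclideanSpace ℝ (Fin n) =>
        (2 * b * ((inner ℝ a y : ℝ))⁻¹ - 2 * (inner ℝ a y : ℝ)) • a)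
      (((2 * b) • ((-(((inner ℝ a x : ℝ)) ^ 2)⁻¹) • (innerSL ℝ a))
        - (2 : ℝ) • (innerSL ℝ a)).smulRight a) x := by
    have hinv : HasFDerivAt (fun y : EuclideanSpace ℝ (Fin n) => ((inner ℝ a y : ℝ))⁻¹)
        ((-(((inner ℝ a x : ℝ)) ^ 2)⁻¹) • (innerSL ℝ a)) x := by
      exact (hasDerivAt_inv hS).comp_hasFDerivAt x hSd
    exact ((hinv.const_mul (2 * b)).sub (hSd.const_mul 2)).smul_const a
  exact ((h1.sub (h2.const_smul (2 * b))).add h3)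


theorem pprHasGradientAt (a : EuclideanSpace ℝ (Fin n)) (b : ℝ)
    (x : EuclideanSpace ℝ (Fin n)) (hx : ∀ i, 0 < x i) (hS : 0 < (inner ℝ a x : ℝ)) :
    HasGradientAt (fun y : EuclideanSpace ℝ (Fin n) =>
      (‖a‖ ^ 2 * ‖y‖ ^ 2 - 2 * b * ∑ j, Real.log (y j)) -
        (-(b * Real.log ((inner ℝ a y : ℝ) ^ 2)) + (inner ℝ a y : ℝ) ^ 2))
      (pprGvec a b x) x := by
  have hSd : HasFDerivAt (fun y : EuclideanSpace ℝ (Fin n) => (inner ℝ a y : ℝ)) (innerSL ℝ a) x :=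
    (innerSL ℝ a).hasFDerivAt
  have hp1 : HasFDerivAt (fun y : EuclideanSpace ℝ (Fin n) => ‖a‖ ^ 2 * ‖y‖ ^ 2)
      ((‖a‖ ^ 2) • ((2 : ℕ) • (innerSL ℝ x).comp
        (ContinuousLinearMap.id ℝ (EuclideanSpace ℝ (Fin n))))) x :=
    (hasFDerivAt_id x).norm_sq.const_mul (‖a‖ ^ 2)
  have hp2 : HasFDerivAt (𝕜 := ℝ)
      (fun y : EuclideanSpace ℝ (Fin n) => 2 * b * ∑ j, Real.log (y j))
      ((2 * b) • ∑ j, (x j)⁻¹ • (EuclideanSpace.proj j : EuclideanSpace ℝ (Fin n) →L[ℝ] ℝ)) x := by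
    refine HasFDerivAt.const_mul ?_ (2 * b)
    refine HasFDerivAt.fun_sum fun j _ => ?_
    have hpj : HasFDerivAt (𝕜 := ℝ) (fun y : EuclideanSpace ℝ (Fin n) => y j)
        (EuclideanSpace.proj j) x :=
      ContinuousLinearMap.hasFDerivAt
        (EuclideanSpace.proj j : EuclideanSpace ℝ (Fin n) →L[ℝ] ℝ)
    exact (Real.hasDerivAt_log (hx j).ne').comp_hasFDerivAt x hpj
  have hp4 : HasFDerivAt (fun y : EuclideanSpace ℝ (Fin n) => (inner ℝ a y : ℝ) ^ 2)
      ((inner ℝ a x : ℝ) • innerSL ℝ a + (inner ℝ a x : ℝ) • innerSL ℝ a) x := by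
    simp only [pow_two]; exact hSd.mul hSd
  have hp3 : HasFDerivAt (𝕜 := ℝ)
      (fun y : EuclideanSpace ℝ (Fin n) => b * Real.log ((inner ℝ a y : ℝ) ^ 2))
      (b • ((((inner ℝ a x : ℝ) ^ 2)⁻¹) •
        ((inner ℝ a x : ℝ) • innerSL ℝ a + (inner ℝ a x : ℝ) • innerSL ℝ a))) x := by
    refine HasFDerivAt.const_mul ?_ b
    simpa [Function.comp_def] using (Real.hasDerivAt_log (by positivity)).comp_hasFDerivAt x hp4
  have hg := (hp1.sub hp2).sub ((hp3.neg).add hp4)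
  rw [hasGradientAt_iff_hasFDerivAt]
  refine hg.congr_fderiv ?_
  ext v
  simp only [pprGvec, InnerProductSpace.toDual_apply_apply, inner_add_left, inner_sub_left,
    real_inner_smul_left, sum_inner, EuclideanSpace.inner_single_left, conj_trivial,
    ContinuousLinearMap.coe_sub', ContinuousLinearMap.coe_add', Pi.sub_apply, Pi.add_apply,
    ContinuousLinearMap.coe_smul', Pi.smul_apply, ContinuousLinearMap.sum_apply,
    ContinuousLinearMap.smulRight_apply, ContinuousLinearMap.comp_apply,
    ContinuousLinearMap.id_apply, innerSL_apply_apply, ContinuousLinearMap.neg_apply,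
    smul_eq_mul, nsmul_eq_mul, Nat.cast_ofNat, mul_one]
  have hSsum : (inner ℝ a x : ℝ) = ∑ j, a j * x j := by
    simp [PiLp.inner_apply, mul_comm]
  have hS' : (∑ j, a j * x j) ≠ 0 := hSsum ▸ hS.ne'
  field_simp
  simp only [PiLp.proj_apply, Pi.mul_apply, Pi.ofNat_apply, ContinuousLinearMap.comp_apply,
    ContinuousLinearMap.id_apply, innerSL_apply_apply]
  ring


theorem pprQuad (a : EuclideanSpace ℝ (Fin n)) (ha : ∀ i, 0 ≤ a i) (ha0 : a ≠ 0)
    (b : ℝ) (hb : 0 < b) (x : EuclideanSpace ℝ (Fin n)) (hx : ∀ i, 0 < x i)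
    (v : EuclideanSpace ℝ (Fin n)) : 0 ≤ (inner ℝ v (pprLmap a b x v) : ℝ) := by
  have hS : 0 < (inner ℝ a x : ℝ) := pprS_pos a ha ha0 x hx
  have hSsum : (inner ℝ a x : ℝ) = ∑ j, a j * x j := by simp [PiLp.inner_apply, mul_comm]
  have hAsum : (inner ℝ a v : ℝ) = ∑ j, a j * v j := by simp [PiLp.inner_apply, mul_comm]
  have hQ : (inner ℝ v (pprLmap a b x v) : ℝ) =
      2 * ‖a‖ ^ 2 * ‖v‖ ^ 2 + 2 * b * ∑ j, ((x j) ^ 2)⁻¹ * (v j) ^ 2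
        - 2 * b * ((inner ℝ a x : ℝ) ^ 2)⁻¹ * (inner ℝ a v : ℝ) ^ 2
        - 2 * (inner ℝ a v : ℝ) ^ 2 := by
    --
    simp only [pprLmap, ContinuousLinearMap.add_apply, ContinuousLinearMap.sub_apply,
      ContinuousLinearMap.smul_apply, ContinuousLinearMap.sum_apply,
      ContinuousLinearMap.smulRight_apply, ContinuousLinearMap.id_apply,
      innerSL_apply_apply, ContinuousLinearMap.neg_apply, smul_eq_mul,
      inner_add_right, inner_sub_right, real_inner_smul_right, inner_sum,
      EuclideanSpace.inner_single_right, conj_trivial,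
      real_inner_self_eq_norm_sq, PiLp.proj_apply, mul_neg, neg_mul, neg_neg,
      Finset.sum_neg_distrib]
    rw [real_inner_comm v a]
    ring_nf
  rw [hQ]
  have key1 : (inner ℝ a v : ℝ) ^ 2 ≤ ‖a‖ ^ 2 * ‖v‖ ^ 2 := by
    have h := real_inner_mul_inner_self_le a v
    rw [real_inner_self_eq_norm_sq, real_inner_self_eq_norm_sq] at h
    rw [pow_two]
    exact h
  have hCS := Finset.sum_mul_sq_le_sq_mul_sq Finset.univ
    (fun j => Real.sqrt (a j * x j)) (fun j => Real.sqrt (a j * x j) * (v j / x j))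
  have e1 : ∀ j, Real.sqrt (a j * x j) * (Real.sqrt (a j * x j) * (v j / x j))
      = a j * v j := fun j => by
    rw [← mul_assoc, Real.mul_self_sqrt (mul_nonneg (ha j) (hx j).le)]
    field_simp [(hx j).ne']
  have e2 : ∀ j, Real.sqrt (a j * x j) ^ 2 = a j * x j := fun j =>
    Real.sq_sqrt (mul_nonneg (ha j) (hx j).le)
  have e3 : ∀ j, (Real.sqrt (a j * x j) * (v j / x j)) ^ 2
      = (a j * x j) * (v j / x j) ^ 2 := fun j => by
    rw [mul_pow, Real.sq_sqrt (mul_nonneg (ha j) (hx j).le)]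
  simp only [e1, e2, e3] at hCS
  have hSpos : 0 < ∑ j, a j * x j := hSsum ▸ hS
  have hstep : ∑ j, (a j * x j) * (v j / x j) ^ 2
      ≤ (∑ j, a j * x j) * ∑ j, ((x j) ^ 2)⁻¹ * (v j) ^ 2 := by
    rw [Finset.mul_sum]
    refine Finset.sum_le_sum fun j _ => ?_
    have hax : a j * x j ≤ ∑ k, a k * x k :=
      Finset.single_le_sum (fun k _ => mul_nonneg (ha k) (hx k).le) (Finset.mem_univ j)
    have hd : (v j / x j) ^ 2 = ((x j) ^ 2)⁻¹ * (v j) ^ 2 := by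
      rw [div_pow]; ring
    rw [hd]
    exact mul_le_mul_of_nonneg_right hax (by positivity)
  have hA2 : (inner ℝ a v : ℝ) ^ 2
      ≤ (inner ℝ a x : ℝ) ^ 2 * ∑ j, ((x j) ^ 2)⁻¹ * (v j) ^ 2 := by
    rw [hAsum, hSsum]
    calc (∑ j, a j * v j) ^ 2 ≤ (∑ j, a j * x j) * ∑ j, (a j * x j) * (v j / x j) ^ 2 := hCS
      _ ≤ (∑ j, a j * x j) * ((∑ j, a j * x j) * ∑ j, ((x j) ^ 2)⁻¹ * (v j) ^ 2) :=
          mul_le_mul_of_nonneg_left hstep hSpos.le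
      _ = (∑ j, a j * x j) ^ 2 * ∑ j, ((x j) ^ 2)⁻¹ * (v j) ^ 2 := by ring
  have hS2 : (0:ℝ) < (inner ℝ a x : ℝ) ^ 2 := by positivity
  have key2 : ((inner ℝ a x : ℝ) ^ 2)⁻¹ * (inner ℝ a v : ℝ) ^ 2
      ≤ ∑ j, ((x j) ^ 2)⁻¹ * (v j) ^ 2 := by
    calc ((inner ℝ a x : ℝ) ^ 2)⁻¹ * (inner ℝ a v : ℝ) ^ 2
        ≤ ((inner ℝ a x : ℝ) ^ 2)⁻¹ *
          ((inner ℝ a x : ℝ) ^ 2 * ∑ j, ((x j) ^ 2)⁻¹ * (v j) ^ 2) :=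
          mul_le_mul_of_nonneg_left hA2 (inv_nonneg.2 hS2.le)
      _ = ∑ j, ((x j) ^ 2)⁻¹ * (v j) ^ 2 := by field_simp
  have h2b := mul_le_mul_of_nonneg_left key2 (by positivity : (0:ℝ) ≤ 2 * b)
  linarith [key1, h2b]

end Aux

/-- On the positive orthant, with `f(x) = -b·log(⟨a,x⟩²) + ⟨a,x⟩²` and
`h(x) = ‖a‖²‖x‖² - 2b·∑ⱼ log xⱼ`, the Hessian of `h - f` is positive
semidefinite at every point of the positive orthant, i.e. `f` is `1`-smooth
relative to `h` (`h - f` is convex on the positive orthant). -/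
theorem poisson_phase_retrieval_relsmooth {n : ℕ}
    (a : EuclideanSpace ℝ (Fin n)) (ha : ∀ i, 0 ≤ a i) (ha0 : a ≠ 0)
    (b : ℝ) (hb : 0 < b) :
    (∀ x : EuclideanSpace ℝ (Fin n), (∀ i, 0 < x i) →
      ∀ v : EuclideanSpace ℝ (Fin n),
        0 ≤ (inner ℝ v ((fderiv ℝ (gradient (fun y : EuclideanSpace ℝ (Fin n) =>
          (‖a‖ ^ 2 * ‖y‖ ^ 2 - 2 * b * ∑ j, Real.log (y j)) -
            (-(b * Real.log ((inner ℝ a y : ℝ) ^ 2)) + (inner ℝ a y : ℝ) ^ 2))) x) v) : ℝ)) ∧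
    ConvexOn ℝ {x : EuclideanSpace ℝ (Fin n) | ∀ i, 0 < x i}
      (fun y => (‖a‖ ^ 2 * ‖y‖ ^ 2 - 2 * b * ∑ j, Real.log (y j)) -
        (-(b * Real.log ((inner ℝ a y : ℝ) ^ 2)) + (inner ℝ a y : ℝ) ^ 2)) := by
  have hopen : IsOpen {y : EuclideanSpace ℝ (Fin n) | ∀ i, 0 < y i} := by
    have hset : {y : EuclideanSpace ℝ (Fin n) | ∀ i, 0 < y i}
        = ⋂ i, {y : EuclideanSpace ℝ (Fin n) | 0 < y i} := by
      ext y; simp [Set.mem_iInter]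
    rw [hset]
    refine isOpen_iInter_of_finite fun i => ?_
    exact isOpen_lt continuous_const (EuclideanSpace.proj (𝕜 := ℝ) i).continuous
  constructor
  · intro x hx v
    have hS := pprS_pos a ha ha0 x hx
    have hev : (gradient (fun y : EuclideanSpace ℝ (Fin n) =>
        (‖a‖ ^ 2 * ‖y‖ ^ 2 - 2 * b * ∑ j, Real.log (y j)) -
          (-(b * Real.log ((inner ℝ a y : ℝ) ^ 2)) + (inner ℝ a y : ℝ) ^ 2)))
        =ᶠ[nhds x] pprGvec a b := by
      filter_upwards [hopen.mem_nhds hx] with y hy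
      exact (pprHasGradientAt a b y hy (pprS_pos a ha ha0 y hy)).gradient
    rw [hev.fderiv_eq, (pprHasFDerivAt_Gvec a b x hx hS.ne').fderiv]
    exact pprQuad a ha ha0 b hb x hx v
  · refine ⟨?_, ?_⟩
    · intro p hp q hq α β hα hβ hαβ
      intro i
      have hcoord : (α • p + β • q) i = α * p i + β * q i := by
        simp [PiLp.add_apply, PiLp.smul_apply, smul_eq_mul]
      show 0 < (α • p + β • q) i
      rw [hcoord]
      rcases eq_or_lt_of_le hα with h|h
      · have hβ1 : β = 1 := by linarith
        simp only [← h, hβ1, zero_mul, one_mul, zero_add]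
        exact hq i
      · exact add_pos_of_pos_of_nonneg (mul_pos h (hp i)) (mul_nonneg hβ (hq i).le)
    · intro p hp q hq α β hα hβ hαβ
      set g : EuclideanSpace ℝ (Fin n) → ℝ := fun y =>
        (‖a‖ ^ 2 * ‖y‖ ^ 2 - 2 * b * ∑ j, Real.log (y j)) -
          (-(b * Real.log ((inner ℝ a y : ℝ) ^ 2)) + (inner ℝ a y : ℝ) ^ 2) with hgdef
      have hc : ∀ t ∈ Icc (0:ℝ) 1, ∀ i, 0 < (q + t • (p - q)) i := by
        intro t ht i
        have hcoord : (q + t • (p - q)) i = q i + t * (p i - q i) := by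
          simp [PiLp.add_apply, PiLp.smul_apply, PiLp.sub_apply, smul_eq_mul]
        rw [hcoord]
        rcases eq_or_lt_of_le ht.1 with h|h
        · simp only [← h, zero_mul, add_zero]
          exact hq i
        · have h1 := mul_pos h (hp i)
          have h2 := mul_nonneg (sub_nonneg.2 ht.2) (hq i).le
          nlinarith
      have hct : ∀ t : ℝ, HasDerivAt (fun t : ℝ => q + t • (p - q)) (p - q) t := fun t => by
        simpa using ((hasDerivAt_id t).smul_const (p - q)).const_add q
      have hφ' : ∀ t ∈ Icc (0:ℝ) 1, HasDerivAt (fun s : ℝ => g (q + s • (p - q)))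
          ((inner ℝ (p - q) (pprGvec a b (q + t • (p - q))) : ℝ)) t := by
        intro t ht
        have hgr := (pprHasGradientAt a b _ (hc t ht)
          (pprS_pos a ha ha0 _ (hc t ht))).hasFDerivAt
        have h2 := hgr.comp_hasDerivAt t (hct t)
        have h3 : (inner ℝ (p - q) (pprGvec a b (q + t • (p - q))) : ℝ)
            = (InnerProductSpace.toDual ℝ (EuclideanSpace ℝ (Fin n)))
                (pprGvec a b (q + t • (p - q))) (p - q) := by
          rw [InnerProductSpace.toDual_apply_apply, real_inner_comm]
        rw [h3]
        exact h2
      have hφ'' : ∀ t ∈ Icc (0:ℝ) 1,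
          HasDerivAt (fun s : ℝ => (inner ℝ (p - q) (pprGvec a b (q + s • (p - q))) : ℝ))
            ((inner ℝ (p - q) (pprLmap a b (q + t • (p - q)) (p - q)) : ℝ)) t := by
        intro t ht
        have hF := pprHasFDerivAt_Gvec a b _ (hc t ht)
          (pprS_pos a ha ha0 _ (hc t ht)).ne'
        have h1 := hF.comp_hasDerivAt t (hct t)
        exact ((innerSL ℝ (p - q)).hasFDerivAt).comp_hasDerivAt t h1
      have hconvφ : ConvexOn ℝ (Icc (0:ℝ) 1) (fun s : ℝ => g (q + s • (p - q))) := by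
        refine convexOn_of_hasDerivWithinAt2_nonneg (convex_Icc 0 1)
          (fun t ht => (hφ' t ht).continuousAt.continuousWithinAt)
          (f' := fun t => (inner ℝ (p - q) (pprGvec a b (q + t • (p - q))) : ℝ))
          (f'' := fun t => (inner ℝ (p - q) (pprLmap a b (q + t • (p - q)) (p - q)) : ℝ))
          (fun t ht => ?_) (fun t ht => ?_) (fun t ht => ?_)
        · rw [interior_Icc] at ht
          exact (hφ' t (Ioo_subset_Icc_self ht)).hasDerivWithinAt
        · rw [interior_Icc] at ht
          exact (hφ'' t (Ioo_subset_Icc_self ht)).hasDerivWithinAt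
        · rw [interior_Icc] at ht
          exact pprQuad a ha ha0 b hb _ (hc t (Ioo_subset_Icc_self ht)) (p - q)
      have h1m : (1:ℝ) ∈ Icc (0:ℝ) 1 := by norm_num
      have h0m : (0:ℝ) ∈ Icc (0:ℝ) 1 := by norm_num
      have h2 := hconvφ.2 h1m h0m hα hβ hαβ
      simp only [smul_eq_mul, mul_one, mul_zero, add_zero, one_smul, zero_smul] at h2
      have eα : q + α • (p - q) = α • p + β • q := by
        have hβ' : β = 1 - α := by linarith
        rw [hβ', smul_sub, sub_smul, one_smul]
        abel
      rw [eα] at h2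
      simpa [smul_eq_mul] using h2
end
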